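/- For every natural number n, common knowledge of Off is unattainable at the history h_n = (Off, rⁿ): there exists a history of length n reachable from h_n by finitely many steps of the relation R whose last location is On. Consequently C Off fails at h_n. -/

import Mathlib

/-- Transition function: reset (`false`) always yields Off (`false`),
    toggle (`true`) flips the location. -/
def step (l a : Bool) : Bool := if a then !l else false

/-- A history: an initial location together with a list of actions. -/
abbrev Hist := Bool × List Bool

/-- The sequence of locations visited along a history (length = #actions + 1). -/
def locSeq (h : Hist) : List Bool := List.scanl step h.1 h.2

/-- The last location of a history (the final entry of `locSeq`). -/
def lastLoc (h : Hist) : Bool := List.foldl step h.1 h.2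

/-- Appending an action to a history. -/
def ext (h : Hist) (a : Bool) : Hist := (h.1, h.2 ++ [a])

/-- Human indistinguishability: equal action lists. -/
def humanInd (h₁ h₂ : Hist) : Prop := h₁.2 = h₂.2

/-- AI indistinguishability: equal location sequences. -/
def aiInd (h₁ h₂ : Hist) : Prop := locSeq h₁ = locSeq h₂

/-- The union of the two indistinguishability relations. -/
def GRel (h₁ h₂ : Hist) : Prop := humanInd h₁ h₂ ∨ aiInd h₁ h₂

/-- The history `(Off, rⁿ)`: initial location Off, then `n` reset actions. -/
def hn (n : ℕ) : Hist := (false, List.replicate n false)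

/-- `reachLe k h g`: `g` is reachable from `h` by at most `k` steps of `GRel`. -/
def reachLe : ℕ → Hist → Hist → Prop
  | 0, h, g => h = g
  | k+1, h, g => reachLe k h g ∨ ∃ h', GRel h h' ∧ reachLe k h' g

/-- The witness histories: alternating initial location, all toggles. -/
def gN (n : ℕ) : Hist := (decide (n % 2 = 0), List.replicate n true)

lemma foldl_toggle (n : ℕ) (l : Bool) :
    List.foldl step l (List.replicate n true) = (l != decide (n % 2 = 1)) := by
  induction n generalizing l with
  | zero => simp
  | succ k ih =>
    rw [List.replicate_succ, List.foldl_cons, ih]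
    have : step l true = !l := by simp [step]
    rw [this]
    rcases Nat.even_or_odd k with hk | hk <;>
      rcases l <;>
      simp [Nat.succ_mod_two_eq_one_iff, Nat.succ_mod_two_eq_zero_iff,
        Nat.even_iff, Nat.odd_iff] at * <;> simp [hk]

lemma lastLoc_gN (n : ℕ) : lastLoc (gN n) = true := by
  unfold lastLoc gN
  rw [foldl_toggle]
  rcases Nat.even_or_odd n with h | h <;>
    simp [Nat.even_iff, Nat.odd_iff] at h <;> simp [h]

lemma scanl_append (as : List Bool) (a l : Bool) :
    List.scanl step l (as ++ [a]) =
      List.scanl step l as ++ [step (List.foldl step l as) a] := by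
  induction as generalizing l with
  | nil => simp
  | cons b bs ih => simp [List.scanl_cons, ih]

lemma locSeq_ext (h : Hist) (a : Bool) :
    locSeq (ext h a) = locSeq h ++ [step (lastLoc h) a] := by
  rcases h with ⟨l, as⟩
  simp [locSeq, ext, lastLoc, scanl_append]

-- helper: last of scanl is foldl
lemma List.scanl_last_eq_foldl (l : Bool) (as : List Bool) :
    (List.scanl step l as).getLast? = some (List.foldl step l as) := by
  induction as generalizing l with
  | nil => simp
  | cons b bs ih =>
    rw [List.scanl_cons]
    rw [List.getLast?_cons, ih]
    simp

lemma GRel_ext {h g : Hist} (a : Bool) (hg : GRel h g) : GRel (ext h a) (ext g a) := by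
  rcases hg with hg | hg
  · exact Or.inl (by simp [humanInd, ext, humanInd] at hg ⊢; rw [hg])
  · refine Or.inr ?_
    have hl : lastLoc h = lastLoc g := by
      have h2 : (locSeq h).getLast? = (locSeq g).getLast? := by rw [hg]
      rcases h with ⟨l, as⟩; rcases g with ⟨l', as'⟩
      simp only [locSeq] at h2
      rw [List.scanl_last_eq_foldl, List.scanl_last_eq_foldl] at h2
      simpa [lastLoc] using h2
    unfold aiInd at hg ⊢
    rw [locSeq_ext, locSeq_ext, hg, hl]

lemma reach_ext {h g : Hist} (a : Bool)
    (hr : Relation.ReflTransGen GRel h g) :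
    Relation.ReflTransGen GRel (ext h a) (ext g a) := by
  induction hr with
  | refl => exact Relation.ReflTransGen.refl
  | tail _ hstep ih => exact ih.tail (GRel_ext a hstep)

lemma gN_spec (n : ℕ) :
    ∃ g : Hist, g.2.length = n ∧ Relation.ReflTransGen GRel (hn n) g ∧
      lastLoc g = true := by
  refine ⟨gN n, by simp [gN], ?_, lastLoc_gN n⟩
  induction n with
  | zero =>
    exact Relation.ReflTransGen.single (Or.inl (rfl : humanInd (hn 0) (gN 0)))
  | succ k ih =>
    have h1 : hn (k+1) = ext (hn k) false := by
      simp [hn, ext, List.replicate_succ']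
    have h2 : Relation.ReflTransGen GRel (hn (k+1)) (ext (gN k) false) := by
      rw [h1]; exact reach_ext false ih
    have h3 : GRel (ext (gN k) false) ((gN k).1, List.replicate (k+1) true) := by
      refine Or.inr ?_
      have : ((gN k).1, List.replicate (k+1) true) = ext (gN k) true := by
        simp [ext, gN, List.replicate_succ']
      rw [this, aiInd, locSeq_ext, locSeq_ext, lastLoc_gN]
      simp [step]
    have h4 : GRel ((gN k).1, List.replicate (k+1) true) (gN (k+1)) := by
      exact Or.inl (rfl : _ = _)
    exact (h2.tail h3).tail h4

/-- common knowledge of Off is unattainable at `hn n`: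
    some history of length `n` in the reflexive-transitive closure of `GRel`
    from `hn n` has last location On; hence `C Off` fails at `hn n`. -/
theorem stmt1 (n : ℕ) :
    (∃ g : Hist, g.2.length = n ∧ Relation.ReflTransGen GRel (hn n) g ∧
      lastLoc g = true) ∧
    ¬ (∀ g : Hist, Relation.ReflTransGen GRel (hn n) g → lastLoc g = false) := by
  obtain ⟨g, hlen, hreach, hlast⟩ := gN_spec n
  refine ⟨⟨g, hlen, hreach, hlast⟩, fun H => ?_⟩
  have := H g hreach
  simp [hlast] at this
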